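/- Let k be a field, n a positive integer, and R = Σ_{i,j=1}^n e_{ij} ⊗ A_{ij} ∈ M_n(k)⊗M_n(k) an invertible element, where (e_{ij}) is the canonical matrix unit basis of M_n(k) and A_{ij} ∈ M_n(k) (equivalently, R is the invertible block matrix (A_{ij})_{i,j=1}^n ∈ M_{n²}(k) under the Kronecker-product identification M_n(k)⊗M_n(k) ≅ M_{n²}(k)). Then R is a solution of the pentagon equation if and only if Σ_{j=1}^n A_{ij} ⊗ A_{jp} = R(A_{ip} ⊗ I_n)R⁻¹ for all i, p = 1,…,n. -/

import Mathlib

open TensorProduct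

set_option maxHeartbeats 1000000
set_option synthInstance.maxHeartbeats 200000

namespace PentagonPaper

section Pentagon

variable (k : Type*) [Field k] (A : Type*) [Ring A] [Algebra k A]

/-- `x ⊗ y ↦ x ⊗ y ⊗ 1` -/
noncomputable def leg12 : A ⊗[k] A →ₐ[k] A ⊗[k] (A ⊗[k] A) :=
  Algebra.TensorProduct.map (AlgHom.id k A) Algebra.TensorProduct.includeLeft

/-- `x ⊗ y ↦ x ⊗ 1 ⊗ y` -/
noncomputable def leg13 : A ⊗[k] A →ₐ[k] A ⊗[k] (A ⊗[k] A) :=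
  Algebra.TensorProduct.map (AlgHom.id k A) Algebra.TensorProduct.includeRight

/-- `x ⊗ y ↦ 1 ⊗ x ⊗ y` -/
noncomputable def leg23 : A ⊗[k] A →ₐ[k] A ⊗[k] (A ⊗[k] A) :=
  Algebra.TensorProduct.includeRight

variable {k A}

/-- The pentagon equation `R¹²R¹³R²³ = R²³R¹²`. -/
def IsPentagon (R : A ⊗[k] A) : Prop :=
  leg12 k A R * leg13 k A R * leg23 k A R = leg23 k A R * leg12 k A R

/-- `φ ↦ (id ⊗ φ)(R)`, i.e. the map sending a functional to the corresponding
left coefficient of `R`. -/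
noncomputable def lCoefMap (R : A ⊗[k] A) : Module.Dual k A →ₗ[k] A :=
  (TensorProduct.rid k A).toLinearMap ∘ₗ LinearMap.applyₗ R ∘ₗ LinearMap.lTensorHom A

/-- `φ ↦ (φ ⊗ id)(R)`, i.e. the map sending a functional to the corresponding
right coefficient of `R`. -/
noncomputable def rCoefMap (R : A ⊗[k] A) : Module.Dual k A →ₗ[k] A :=
  (TensorProduct.lid k A).toLinearMap ∘ₗ LinearMap.applyₗ R ∘ₗ LinearMap.rTensorHom A

/-- The space `R_(l)` of left coefficients of `R`. -/
noncomputable def lCoefs (R : A ⊗[k] A) : Submodule k A := LinearMap.range (lCoefMap R)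

/-- The space `R_(r)` of right coefficients of `R`. -/
noncomputable def rCoefs (R : A ⊗[k] A) : Submodule k A := LinearMap.range (rCoefMap R)

/-- `R` is unitary if `1 ∈ R_(l) ∩ R_(r)`. -/
def IsUnitary (R : A ⊗[k] A) : Prop := (1 : A) ∈ lCoefs R ∧ (1 : A) ∈ rCoefs R

/-- The length `l(R)`: the minimal `m` such that `R = ∑_{i=1}^m aᵢ ⊗ bᵢ`. -/
noncomputable def length (R : A ⊗[k] A) : ℕ :=
  sInf {m : ℕ | ∃ a b : Fin m → A, R = ∑ i, a i ⊗ₜ[k] b i}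

/-- The left `R`-coinvariants `A^{R,l} = {a | R(a ⊗ 1) = a ⊗ 1}`. -/
noncomputable def lCoinv (R : A ⊗[k] A) : Submodule k A where
  carrier := {a : A | R * (a ⊗ₜ[k] (1 : A)) = a ⊗ₜ[k] (1 : A)}
  add_mem' := by
    intro a b ha hb
    simp only [Set.mem_setOf_eq, TensorProduct.add_tmul, mul_add] at *
    rw [ha, hb]
  zero_mem' := by simp
  smul_mem' := by
    intro c a ha
    simp only [Set.mem_setOf_eq] at *
    rw [← TensorProduct.smul_tmul', mul_smul_comm, ha]

/-- The right `R`-coinvariants `A^{R,r} = {a | (1 ⊗ a)R = 1 ⊗ a}`. -/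
noncomputable def rCoinv (R : A ⊗[k] A) : Submodule k A where
  carrier := {a : A | ((1 : A) ⊗ₜ[k] a) * R = (1 : A) ⊗ₜ[k] a}
  add_mem' := by
    intro a b ha hb
    simp only [Set.mem_setOf_eq, TensorProduct.tmul_add, add_mul] at *
    rw [ha, hb]
  zero_mem' := by simp
  smul_mem' := by
    intro c a ha
    simp only [Set.mem_setOf_eq, TensorProduct.tmul_smul, smul_mul_assoc] at *
    rw [ha]

/-- The comultiplication `Δ_r : a ↦ R⁻¹(1 ⊗ a)R` on `A`. -/
noncomputable def deltaR (R : A ⊗[k] A) : A →ₗ[k] A ⊗[k] A where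
  toFun a := Ring.inverse R * ((1 : A) ⊗ₜ[k] a) * R
  map_add' a b := by simp [TensorProduct.tmul_add, mul_add, add_mul]
  map_smul' c a := by simp [TensorProduct.tmul_smul, mul_smul_comm, smul_mul_assoc]

/-- The comultiplication `Δ_l : a ↦ R(a ⊗ 1)R⁻¹` on `A`. -/
noncomputable def deltaL (R : A ⊗[k] A) : A →ₗ[k] A ⊗[k] A where
  toFun a := R * (a ⊗ₜ[k] (1 : A)) * Ring.inverse R
  map_add' a b := by simp [TensorProduct.add_tmul, mul_add, add_mul]
  map_smul' c a := by
    simp only [RingHom.id_apply]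
    rw [← TensorProduct.smul_tmul', mul_smul_comm, smul_mul_assoc]

end Pentagon

section Aux

variable {k : Type u} [Field k] {n : ℕ}

/-- The linear functional picking out the `(i, p)` entry of a matrix. -/
noncomputable def entryLM (i p : Fin n) : Matrix (Fin n) (Fin n) k →ₗ[k] k where
  toFun m := m i p
  map_add' _ _ := rfl
  map_smul' _ _ := rfl

lemma extract_coeff {B : Type*} [AddCommMonoid B] [Module k B]
    (X Y : Fin n → Fin n → B)
    (h : (∑ a : Fin n, ∑ b : Fin n, (Matrix.single a b (1 : k)) ⊗ₜ[k] X a b) =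
         (∑ a : Fin n, ∑ b : Fin n, (Matrix.single a b (1 : k)) ⊗ₜ[k] Y a b))
    (i p : Fin n) : X i p = Y i p := by
  have key : ∀ Z : Fin n → Fin n → B,
      ((TensorProduct.lid k B).toLinearMap ∘ₗ
        LinearMap.rTensor B (entryLM i p))
        (∑ a : Fin n, ∑ b : Fin n, (Matrix.single a b (1 : k)) ⊗ₜ[k] Z a b)
        = Z i p := by
    intro Z
    have eval : ∀ (m : Matrix (Fin n) (Fin n) k) (z : B),
        ((TensorProduct.lid k B).toLinearMap ∘ₗ LinearMap.rTensor B (entryLM i p))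
          (m ⊗ₜ[k] z) = (m i p) • z := by
      intro m z
      simp [entryLM]
      rfl
    rw [map_sum]
    rw [Finset.sum_eq_single i]
    · rw [map_sum, Finset.sum_eq_single p]
      · rw [eval, Matrix.single_apply_same, one_smul]
      · intro b _ hb
        rw [eval, Matrix.single_apply_of_ne (h := fun h' : i = i ∧ b = p => hb h'.2), zero_smul]
      · intro hp; exact absurd (Finset.mem_univ p) hp
    · intro a _ ha
      rw [map_sum]
      refine Finset.sum_eq_zero fun b _ => ?_
      rw [eval, Matrix.single_apply_of_ne (h := fun h' : a = i ∧ b = p => ha h'.1), zero_smul]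
    · intro hi; exact absurd (Finset.mem_univ i) hi
  have := congrArg ((TensorProduct.lid k B).toLinearMap ∘ₗ
    LinearMap.rTensor B (entryLM i p)) h
  rwa [key X, key Y] at this

lemma stdBasis_collapse_step {V : Type*} [AddCommMonoid V] [Module k V]
    (i j b : Fin n) (X : Fin n → V) :
    (∑ a : Fin n,
      (Matrix.single i j (1 : k) * Matrix.single a b (1 : k)) ⊗ₜ[k] X a)
    = (Matrix.single i b (1 : k)) ⊗ₜ[k] X j := by
  rw [Finset.sum_eq_single j]
  · rw [Matrix.single_mul_single_same, one_mul]
  · intro a _ ha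
    rw [Matrix.single_mul_single_of_ne (h := Ne.symm ha), TensorProduct.zero_tmul]
  · intro h; exact absurd (Finset.mem_univ j) h

lemma matrixunit_collapse {B : Type*} [Ring B] [Algebra k B] (x y : Fin n → Fin n → B) :
    (∑ i : Fin n, ∑ j : Fin n, (Matrix.single i j (1 : k)) ⊗ₜ[k] x i j) *
      (∑ i : Fin n, ∑ j : Fin n, (Matrix.single i j (1 : k)) ⊗ₜ[k] y i j)
    = ∑ i : Fin n, ∑ p : Fin n, (Matrix.single i p (1 : k)) ⊗ₜ[k]
        (∑ j : Fin n, x i j * y j p) := by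
  rw [Finset.sum_mul]
  refine Finset.sum_congr rfl fun i _ => ?_
  rw [Finset.sum_mul]
  have inner : ∀ j : Fin n,
      ((Matrix.single i j (1 : k)) ⊗ₜ[k] x i j) *
        (∑ a : Fin n, ∑ b : Fin n, (Matrix.single a b (1 : k)) ⊗ₜ[k] y a b)
      = ∑ b : Fin n, (Matrix.single i b (1 : k)) ⊗ₜ[k] (x i j * y j b) := by
    intro j
    rw [Finset.mul_sum]
    rw [Finset.sum_congr rfl fun a _ => Finset.mul_sum (Finset.univ)
      (fun b => (Matrix.single a b (1 : k)) ⊗ₜ[k] y a b)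
      ((Matrix.single i j (1 : k)) ⊗ₜ[k] x i j)]
    rw [Finset.sum_comm]
    refine Finset.sum_congr rfl fun b _ => ?_
    rw [Finset.sum_congr rfl fun a _ =>
      Algebra.TensorProduct.tmul_mul_tmul (Matrix.single i j (1 : k))
        (Matrix.single a b (1 : k)) (x i j) (y a b)]
    exact stdBasis_collapse_step i j b _
  rw [Finset.sum_congr rfl fun j _ => inner j, Finset.sum_comm]
  exact Finset.sum_congr rfl fun p _ => (TensorProduct.tmul_sum _ _ _).symm

lemma one_tmul_mul_sum {B : Type*} [Ring B] [Algebra k B] (r : B) (x : Fin n → Fin n → B) :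
    ((1 : Matrix (Fin n) (Fin n) k) ⊗ₜ[k] r) *
      (∑ i : Fin n, ∑ j : Fin n, (Matrix.single i j (1 : k)) ⊗ₜ[k] x i j)
    = ∑ i : Fin n, ∑ j : Fin n, (Matrix.single i j (1 : k)) ⊗ₜ[k] (r * x i j) := by
  rw [Finset.mul_sum]
  refine Finset.sum_congr rfl fun i _ => ?_
  rw [Finset.mul_sum]
  refine Finset.sum_congr rfl fun j _ => ?_
  rw [Algebra.TensorProduct.tmul_mul_tmul, one_mul]

lemma sum_mul_one_tmul {B : Type*} [Ring B] [Algebra k B] (r : B) (x : Fin n → Fin n → B) :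
    (∑ i : Fin n, ∑ j : Fin n, (Matrix.single i j (1 : k)) ⊗ₜ[k] x i j) *
      ((1 : Matrix (Fin n) (Fin n) k) ⊗ₜ[k] r)
    = ∑ i : Fin n, ∑ j : Fin n, (Matrix.single i j (1 : k)) ⊗ₜ[k] (x i j * r) := by
  rw [Finset.sum_mul]
  refine Finset.sum_congr rfl fun i _ => ?_
  rw [Finset.sum_mul]
  refine Finset.sum_congr rfl fun j _ => ?_
  rw [Algebra.TensorProduct.tmul_mul_tmul, mul_one]


end Aux

/-- **Statement 19.** Writing an invertible `R ∈ Mₙ(k) ⊗ Mₙ(k)` as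
`R = ∑_{i,j} e_{ij} ⊗ A_{ij}` (i.e. as the block matrix `(A_{ij})` under the Kronecker-product
identification), `R` is a solution of the pentagon equation if and only if
`∑_j A_{ij} ⊗ A_{jp} = R(A_{ip} ⊗ Iₙ)R⁻¹` for all `i, p`. -/
theorem pentagon_iff_block_condition
    {k : Type u} [Field k] {n : ℕ}
    (M : Fin n → Fin n → Matrix (Fin n) (Fin n) k)
    (R : Matrix (Fin n) (Fin n) k ⊗[k] Matrix (Fin n) (Fin n) k)
    (hR : R = ∑ i : Fin n, ∑ j : Fin n,
      (Matrix.single i j (1 : k)) ⊗ₜ[k] M i j)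
    (hinv : IsUnit R) :
    IsPentagon R ↔
      ∀ i p : Fin n,
        (∑ j : Fin n, M i j ⊗ₜ[k] M j p) =
          R * (M i p ⊗ₜ[k] (1 : Matrix (Fin n) (Fin n) k)) * Ring.inverse R := by
  -- compute the three legs
  have h12 : leg12 k _ R = ∑ i : Fin n, ∑ j : Fin n,
      (Matrix.single i j (1 : k)) ⊗ₜ[k] ((M i j) ⊗ₜ[k] (1 : Matrix (Fin n) (Fin n) k)) := by
    rw [hR]
    simp [leg12, map_sum, Algebra.TensorProduct.map_tmul]
  have h13 : leg13 k _ R = ∑ i : Fin n, ∑ j : Fin n,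
      (Matrix.single i j (1 : k)) ⊗ₜ[k] ((1 : Matrix (Fin n) (Fin n) k) ⊗ₜ[k] (M i j)) := by
    rw [hR]
    simp [leg13, map_sum, Algebra.TensorProduct.map_tmul]
  have h23 : leg23 k _ R = (1 : Matrix (Fin n) (Fin n) k) ⊗ₜ[k] R := by
    simp [leg23]
  -- left-hand side of the pentagon
  have hL : leg12 k _ R * leg13 k _ R * leg23 k _ R
      = ∑ i : Fin n, ∑ p : Fin n, (Matrix.single i p (1 : k)) ⊗ₜ[k]
          ((∑ j : Fin n, M i j ⊗ₜ[k] M j p) * R) := by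
    rw [h12, h13, h23,
      matrixunit_collapse (fun i j => (M i j) ⊗ₜ[k] (1 : Matrix (Fin n) (Fin n) k))
        (fun i j => (1 : Matrix (Fin n) (Fin n) k) ⊗ₜ[k] (M i j)),
      sum_mul_one_tmul R (fun i p => ∑ j : Fin n,
        ((M i j) ⊗ₜ[k] (1 : Matrix (Fin n) (Fin n) k)) *
          ((1 : Matrix (Fin n) (Fin n) k) ⊗ₜ[k] (M j p)))]
    simp only [Algebra.TensorProduct.tmul_mul_tmul, one_mul, mul_one]
  -- right-hand side of the pentagon
  have hRhs : leg23 k _ R * leg12 k _ R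
      = ∑ i : Fin n, ∑ p : Fin n, (Matrix.single i p (1 : k)) ⊗ₜ[k]
          (R * (M i p ⊗ₜ[k] (1 : Matrix (Fin n) (Fin n) k))) := by
    rw [h12, h23,
      one_tmul_mul_sum R (fun i p => (M i p) ⊗ₜ[k] (1 : Matrix (Fin n) (Fin n) k))]
  -- the pentagon is equivalent to the componentwise identity `X • R = R • Y`
  have hpent : IsPentagon R ↔ ∀ i p : Fin n,
      (∑ j : Fin n, M i j ⊗ₜ[k] M j p) * R = R * (M i p ⊗ₜ[k] (1 : Matrix (Fin n) (Fin n) k)) := by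
    unfold IsPentagon
    rw [hL, hRhs]
    constructor
    · intro h i p
      exact extract_coeff _ _ h i p
    · intro h
      exact Finset.sum_congr rfl fun i _ => Finset.sum_congr rfl fun p _ => by rw [h i p]
  rw [hpent]
  constructor
  · intro h i p
    rw [← h i p, mul_assoc, Ring.mul_inverse_cancel R hinv, mul_one]
  · intro h i p
    rw [h i p, mul_assoc _ (Ring.inverse R) R, Ring.inverse_mul_cancel R hinv, mul_one]

end PentagonPaper
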